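/- Define Δ_n(k) := Σ_{r|n} μ(n/r)·(Σ_{j=0}^{r-1} k^j) for k ≥ 1, and N_{n,d} := Σ_{i=1}^{d} (-1)^{d-i} · C(n, d-i) · Δ_n(i). Then for every k ≥ 1 and n ≥ 2, Σ_{d=1}^{k} C(n+k-d-1, n-1) · N_{n,d} = Δ_n(k). -/

import Mathlib

open PowerSeries Finset

open scoped ArithmeticFunction

/-- `Δ_n(k) = ∑_{r|n} μ(n/r) (∑_{j=0}^{r-1} k^j)`. -/
def Delta (n k : ℕ) : ℤ :=
  ∑ r ∈ n.divisors, (ArithmeticFunction.moebius (n / r)) *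
    (∑ j ∈ Finset.range r, (k : ℤ) ^ j)

/-- `N_{n,d} = ∑_{i=1}^{d} (-1)^{d-i} C(n, d-i) Δ_n(i)`. -/
def Ncyc (n d : ℕ) : ℤ :=
  ∑ i ∈ Finset.Icc 1 d, (-1 : ℤ) ^ (d - i) * (n.choose (d - i)) * Delta n i

lemma coeff_one_sub_X_pow (n i : ℕ) :
    (PowerSeries.coeff (R := ℤ) i) ((1 - PowerSeries.X) ^ n) = (-1 : ℤ) ^ i * n.choose i := by
  have h : (1 - PowerSeries.X : ℤ⟦X⟧) ^ n
      = ∑ m ∈ range (n + 1),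
          PowerSeries.C (R := ℤ) ((-1 : ℤ) ^ m * n.choose m) * PowerSeries.X ^ m := by
    rw [sub_eq_add_neg, add_comm, add_pow]
    refine Finset.sum_congr rfl fun m hm => ?_
    rw [one_pow, neg_pow, mul_one, map_mul, map_pow, map_neg, map_one, map_natCast]
    ring
  rw [h, map_sum]
  simp only [PowerSeries.coeff_C_mul, PowerSeries.coeff_X_pow, mul_ite, mul_one, mul_zero]
  rw [Finset.sum_ite_eq]
  by_cases hi : i ∈ range (n + 1)
  · simp [hi]
  · rw [if_neg hi]
    rw [Finset.mem_range, not_lt] at hi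
    rw [Nat.choose_eq_zero_of_lt (by omega)]
    simp

lemma key (n t : ℕ) (hn : 1 ≤ n) :
    ∑ m ∈ range (t + 1), (-1 : ℤ) ^ m * n.choose m * ((n - 1 + (t - m)).choose (n - 1)) =
      if t = 0 then 1 else 0 := by
  have h1 : ((1 - PowerSeries.X : ℤ⟦X⟧) ^ n) * (invOneSubPow ℤ n).val = 1 := by
    rw [← invOneSubPow_inv_eq_one_sub_pow]
    exact (invOneSubPow ℤ n).inv_val
  have h2 := congrArg (PowerSeries.coeff (R := ℤ) t) h1
  rw [PowerSeries.coeff_mul, PowerSeries.coeff_one,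
    Finset.Nat.sum_antidiagonal_eq_sum_range_succ_mk] at h2
  rw [← h2]
  refine Finset.sum_congr rfl fun m hm => ?_
  rw [coeff_one_sub_X_pow, invOneSubPow_val_eq_mk_sub_one_add_choose_of_pos _ _ hn,
    PowerSeries.coeff_mk]

theorem stmt_16 (n k : ℕ) (hn : 2 ≤ n) (hk : 1 ≤ k) :
    ∑ d ∈ Finset.Icc 1 k, ((n + k - d - 1).choose (n - 1) : ℤ) * Ncyc n d =
      Delta n k := by
  simp only [Ncyc, Finset.mul_sum]
  rw [Finset.sum_comm' (s := Finset.Icc 1 k) (t := fun d => Finset.Icc 1 d)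
    (s' := fun i => Finset.Icc i k) (t' := Finset.Icc 1 k)
    (h := by intro d i; simp only [Finset.mem_Icc]; omega)]
  have step : ∀ i ∈ Finset.Icc 1 k,
      (∑ d ∈ Finset.Icc i k, ((n + k - d - 1).choose (n - 1) : ℤ) *
        ((-1 : ℤ) ^ (d - i) * (n.choose (d - i)) * Delta n i)) =
      (if k - i = 0 then 1 else 0) * Delta n i := by
    intro i hi
    rw [Finset.mem_Icc] at hi
    have : Finset.Icc i k = Finset.Ico i (k + 1) := by
      rw [Finset.Ico_add_one_right_eq_Icc]
    rw [this, Finset.sum_Ico_eq_sum_range]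
    have hki : k + 1 - i = (k - i) + 1 := by omega
    rw [hki, ← key n (k - i) (by omega), Finset.sum_mul]
    refine Finset.sum_congr rfl fun m hm => ?_
    rw [Finset.mem_range] at hm
    have e1 : i + m - i = m := by omega
    have e2 : n + k - (i + m) - 1 = n - 1 + (k - i - m) := by omega
    rw [e1, e2]
    ring
  rw [Finset.sum_congr rfl step]
  have step2 : ∀ i ∈ Finset.Icc 1 k,
      ((if k - i = 0 then (1 : ℤ) else 0) * Delta n i) =
        (if i = k then Delta n i else 0) := by
    intro i hi
    rw [Finset.mem_Icc] at hi
    by_cases h : i = k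
    · simp [h]
    · have h2 : ¬ (k - i = 0) := by omega
      simp [h, h2]
  rw [Finset.sum_congr rfl step2, Finset.sum_ite_eq' (Finset.Icc 1 k) k (Delta n)]
  simp [hk]
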